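/- The Demazure operators satisfy the braid relation: for every Laurent polynomial f in x_1,…,x_N and every 1 ≤ i ≤ N−2, π_i(π_{i+1}(π_i(f))) = π_{i+1}(π_i(π_{i+1}(f))). -/

import Mathlib

noncomputable section


open MvPolynomial

/-- The field of rational functions in `N` variables over `ℚ`. -/
abbrev KK (N : ℕ) : Type := FractionRing (MvPolynomial (Fin N) ℚ)

/-- The variable `x_i` as a rational function. -/
def XV {N : ℕ} (i : Fin N) : KK N :=
  algebraMap (MvPolynomial (Fin N) ℚ) (KK N) (X i)

/-- The field automorphism `s` exchanging the variables `x_i` and `x_j`. -/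
def swapK {N : ℕ} (i j : Fin N) : KK N →+* KK N :=
  IsFractionRing.lift (g := (algebraMap (MvPolynomial (Fin N) ℚ) (KK N)).comp
      (rename (Equiv.swap i j)).toRingHom)
    (by
      rw [RingHom.coe_comp]
      exact (IsFractionRing.injective _ _).comp
        (rename_injective _ (Equiv.swap i j).injective))

/-- The Demazure (isobaric divided difference) operator
`π(f) = (x_i f - s(x_i f)) / (x_i - x_j)` (for `j = i+1`). -/
def dem {N : ℕ} (i j : Fin N) (f : KK N) : KK N :=
  (XV i * f - swapK i j (XV i * f)) / (XV i - XV j)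

/-- The subalgebra of Laurent polynomials: generated by the variables and
their inverses. -/
def LaurentSub (N : ℕ) : Subalgebra ℚ (KK N) :=
  Algebra.adjoin ℚ (Set.range (XV (N := N)) ∪ Set.range (fun i => (XV (N := N) i)⁻¹))

/- Auxiliary lemmas -/

lemma swapK_algebraMap {N : ℕ} (i j : Fin N) (p : MvPolynomial (Fin N) ℚ) :
    swapK i j (algebraMap _ (KK N) p)
      = algebraMap _ (KK N) (rename (Equiv.swap i j) p) := by
  rw [swapK, IsFractionRing.lift_algebraMap]; rfl

lemma swapK_XV {N : ℕ} (i j k : Fin N) :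
    swapK i j (XV k) = XV (Equiv.swap i j k) := by
  rw [XV, swapK_algebraMap, rename_X]; rfl

lemma swapK_swapK {N : ℕ} (i j : Fin N) (g : KK N) :
    swapK i j (swapK i j g) = g := by
  have h : (swapK i j).comp (swapK i j) = RingHom.id (KK N) := by
    apply IsLocalization.ringHom_ext (nonZeroDivisors (MvPolynomial (Fin N) ℚ))
    refine RingHom.ext fun p => ?_
    simp only [RingHom.comp_apply, RingHom.id_apply, swapK_algebraMap, rename_rename]
    rw [show (Equiv.swap i j : Fin N → Fin N) ∘ (Equiv.swap i j) = id from
      funext fun x => Equiv.swap_apply_self i j x, rename_id, AlgHom.id_apply]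
  calc swapK i j (swapK i j g) = ((swapK i j).comp (swapK i j)) g := rfl
    _ = g := by rw [h]; rfl

lemma swapK_braid {N : ℕ} (a b c : Fin N) (hab : a ≠ b) (hbc : b ≠ c) (hac : a ≠ c)
    (g : KK N) :
    swapK b c (swapK a b (swapK b c g)) = swapK a b (swapK b c (swapK a b g)) := by
  have hfun : (⇑(Equiv.swap b c) ∘ ⇑(Equiv.swap a b) ∘ ⇑(Equiv.swap b c) : Fin N → Fin N)
      = ⇑(Equiv.swap a b) ∘ ⇑(Equiv.swap b c) ∘ ⇑(Equiv.swap a b) := by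
    funext x
    simp only [Function.comp_apply]
    rcases eq_or_ne x a with rfl|hxa <;> rcases eq_or_ne x b with rfl|hxb <;>
      rcases eq_or_ne x c with rfl|hxc <;>
      simp_all [Equiv.swap_apply_def, hab.symm, hbc.symm, hac.symm]
  have h : ((swapK b c).comp (swapK a b)).comp (swapK b c)
      = ((swapK a b).comp (swapK b c)).comp (swapK a b) := by
    apply IsLocalization.ringHom_ext (nonZeroDivisors (MvPolynomial (Fin N) ℚ))
    refine RingHom.ext fun p => ?_
    simp only [RingHom.comp_apply, swapK_algebraMap, rename_rename, hfun]
  calc swapK b c (swapK a b (swapK b c g))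
      = (((swapK b c).comp (swapK a b)).comp (swapK b c)) g := rfl
    _ = (((swapK a b).comp (swapK b c)).comp (swapK a b)) g := by rw [h]
    _ = _ := rfl

lemma XV_sub_ne_zero {N : ℕ} {a b : Fin N} (h : a ≠ b) : XV a - XV b ≠ 0 := by
  rw [sub_ne_zero]
  intro he
  exact h (MvPolynomial.X_injective
    (IsFractionRing.injective (MvPolynomial (Fin N) ℚ) (KK N) he))

set_option maxHeartbeats 4000000 in
lemma braid_core {K : Type*} [Field K] (f F1 F2 F3 F4 F5 A B C : K)
    (hAB : A - B ≠ 0) (hBC : B - C ≠ 0) (hAC : A - C ≠ 0) :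
    (A * ((B * ((A * f - B * F1) / (A - B)) - C * ((A * F2 - C * F3) / (A - C))) / (B - C)) -
        B * ((A * ((B * F1 - A * f) / (B - A)) - C * ((B * F4 - C * F5) / (B - C))) / (A - C))) /
      (A - B) =
    (B * ((A * ((B * f - C * F2) / (B - C)) - B * ((A * F1 - C * F4) / (A - C))) / (A - B)) -
        C * ((A * ((C * F2 - B * f) / (C - B)) - C * ((A * F3 - B * F5) / (A - B))) / (A - C))) /
      (B - C) := by
  have hBA : B - A ≠ 0 := fun h => hAB (by linear_combination -h)
  have hCB : C - B ≠ 0 := fun h => hBC (by linear_combination -h)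
  have e1 : B * ((A * f - B * F1) / (A - B)) - C * ((A * F2 - C * F3) / (A - C))
      = (B * (A * f - B * F1) * (A - C) - C * (A * F2 - C * F3) * (A - B))
        / ((A - B) * (A - C)) := by field_simp
  have e2 : A * ((B * F1 - A * f) / (B - A)) - C * ((B * F4 - C * F5) / (B - C))
      = (A * (B * F1 - A * f) * (B - C) - C * (B * F4 - C * F5) * (B - A))
        / ((B - A) * (B - C)) := by field_simp
  have e3 : A * ((B * f - C * F2) / (B - C)) - B * ((A * F1 - C * F4) / (A - C))
      = (A * (B * f - C * F2) * (A - C) - B * (A * F1 - C * F4) * (B - C))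
        / ((B - C) * (A - C)) := by field_simp
  have e4 : A * ((C * F2 - B * f) / (C - B)) - C * ((A * F3 - B * F5) / (A - B))
      = (A * (C * F2 - B * f) * (A - B) - C * (A * F3 - B * F5) * (C - B))
        / ((C - B) * (A - B)) := by field_simp
  rw [e1, e2, e3, e4]
  simp only [div_div, ← mul_div_assoc]
  rw [div_sub_div _ _ (mul_ne_zero (mul_ne_zero hAB hAC) hBC)
        (mul_ne_zero (mul_ne_zero hBA hBC) hAC),
      div_sub_div _ _ (mul_ne_zero (mul_ne_zero hBC hAC) hAB)
        (mul_ne_zero (mul_ne_zero hCB hAB) hAC)]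
  rw [div_div, div_div]
  rw [div_eq_div_iff
    (mul_ne_zero (mul_ne_zero (mul_ne_zero (mul_ne_zero hAB hAC) hBC)
      (mul_ne_zero (mul_ne_zero hBA hBC) hAC)) hAB)
    (mul_ne_zero (mul_ne_zero (mul_ne_zero (mul_ne_zero hBC hAC) hAB)
      (mul_ne_zero (mul_ne_zero hCB hAB) hAC)) hBC)]
  ring

lemma dem_braid_general {N : ℕ} (a b c : Fin N) (hab : a ≠ b) (hbc : b ≠ c)
    (hac : a ≠ c) (f : KK N) :
    dem a b (dem b c (dem a b f)) = dem b c (dem a b (dem b c f)) := by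
  have sab_a : swapK a b (XV a) = XV b := by rw [swapK_XV, Equiv.swap_apply_left]
  have sab_b : swapK a b (XV b) = XV a := by rw [swapK_XV, Equiv.swap_apply_right]
  have sab_c : swapK a b (XV c) = XV c := by
    rw [swapK_XV, Equiv.swap_apply_of_ne_of_ne hac.symm hbc.symm]
  have sbc_a : swapK b c (XV a) = XV a := by
    rw [swapK_XV, Equiv.swap_apply_of_ne_of_ne hab hac]
  have sbc_b : swapK b c (XV b) = XV c := by rw [swapK_XV, Equiv.swap_apply_left]
  have sbc_c : swapK b c (XV c) = XV b := by rw [swapK_XV, Equiv.swap_apply_right]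
  have hbr := swapK_braid a b c hab hbc hac f
  simp only [dem, map_div₀, map_sub, map_mul, sab_a, sab_b, sab_c, sbc_a, sbc_b,
    sbc_c, swapK_swapK, hbr]
  exact braid_core f (swapK a b f) (swapK b c f) (swapK b c (swapK a b f))
    (swapK a b (swapK b c f)) (swapK a b (swapK b c (swapK a b f)))
    (XV a) (XV b) (XV c) (XV_sub_ne_zero hab) (XV_sub_ne_zero hbc) (XV_sub_ne_zero hac)

/-- the Demazure operators satisfy the braid relation
`π_i (π_{i+1} (π_i f)) = π_{i+1} (π_i (π_{i+1} f))` for every Laurent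
polynomial `f` (indices 0-based, so we require `i + 2 < N`). -/
theorem demazure_braid (N i : ℕ) (hi : i + 2 < N)
    (f : KK N) (hf : f ∈ LaurentSub N) :
    dem ⟨i, by omega⟩ ⟨i + 1, by omega⟩
        (dem ⟨i + 1, by omega⟩ ⟨i + 2, hi⟩
          (dem ⟨i, by omega⟩ ⟨i + 1, by omega⟩ f)) =
      dem ⟨i + 1, by omega⟩ ⟨i + 2, hi⟩
        (dem ⟨i, by omega⟩ ⟨i + 1, by omega⟩
          (dem ⟨i + 1, by omega⟩ ⟨i + 2, hi⟩ f)) := by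
  exact dem_braid_general _ _ _
    (by simp [Fin.ext_iff]) (by simp [Fin.ext_iff]) (by simp [Fin.ext_iff]) f

end
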